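/- arXiv:1502.00357 — 3 statements merged into one kernel-verified Lean document; each statement's English description precedes it below -/
import Mathlib

section
/- (Cycles) Let f : {0,1}^n → {0,1} be a Boolean function and let i, j, k ∈ [n] be pairwise distinct indices. Suppose there are bits b_j, b_k ∈ {0,1} such that j ∈ U(f_{i0}), i ∈ U(f_{j b_j}), k ∈ U(f_{i1}), and i ∈ U(f_{k b_k}). Then all three variables i, j, k are useless for f, i.e., {i, j, k} ⊆ U(f). -/
/-- `f` depends on variable `i`: flipping the `i`-th coordinate of some input changes the value. -/
def DependsOnVar {ι : Type*} [DecidableEq ι] (f : (ι → Bool) → Bool) (i : ι) : Prop :=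
  ∃ a : ι → Bool, f (Function.update a i (!a i)) ≠ f a

/-- The restriction `f|_{x_j = b}`, a Boolean function on the remaining variables. -/
def restrictBit {ι : Type*} [DecidableEq ι] (f : (ι → Bool) → Bool) (j : ι) (b : Bool) :
    ({i : ι // i ≠ j} → Bool) → Bool :=
  fun y => f (fun i => if h : i = j then b else y ⟨i, h⟩)

/-- `k ∈ U(f_{jb})`: variable `k` (a variable of `f_{jb}`, i.e. `k ≠ j`) is useless for the
restriction `f_{jb}`. -/
def UselessIn {ι : Type*} [DecidableEq ι] (f : (ι → Bool) → Bool) (j : ι) (b : Bool)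
    (k : ι) : Prop :=
  ∃ h : k ≠ j, ¬ DependsOnVar (restrictBit f j b) ⟨k, h⟩

lemma UselessIn.set_eq {n : ℕ} {f : (Fin n → Bool) → Bool} {j : Fin n} {b : Bool} {k : Fin n}
    (h : UselessIn f j b k) {a : Fin n → Bool} (hb : a j = b) (c : Bool) :
    f (Function.update a k c) = f a := by
  obtain ⟨hkj, hdep⟩ := h
  have hset : ∀ (y : {p : Fin n // p ≠ j} → Bool) (c : Bool),
      restrictBit f j b (Function.update y ⟨k, hkj⟩ c) = restrictBit f j b y := by
    intro y c
    by_cases hc : c = y ⟨k, hkj⟩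
    · rw [hc, Function.update_eq_self]
    · have hc' : c = !(y ⟨k, hkj⟩) := by
        cases c <;> cases h' : y ⟨k, hkj⟩ <;> simp_all
      rw [hc']
      by_contra hne
      exact hdep ⟨y, hne⟩
  have key := hset (fun p => a p.1) c
  have e1 : restrictBit f j b (fun p => a p.1) = f a := by
    unfold restrictBit
    congr 1
    funext p
    by_cases hp : p = j
    · subst hp; simp [hb]
    · simp [hp]
  have e2 : restrictBit f j b (Function.update (fun p => a p.1) ⟨k, hkj⟩ c)
      = f (Function.update a k c) := by
    unfold restrictBit
    congr 1
    funext p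
    by_cases hp : p = j
    · subst hp
      rw [dif_pos rfl, Function.update_of_ne (Ne.symm hkj), hb]
    · rw [dif_neg hp]
      by_cases hpk : p = k
      · subst hpk
        have hpe : (⟨p, hp⟩ : {q : Fin n // q ≠ j}) = ⟨p, hkj⟩ := rfl
        rw [hpe, Function.update_self, Function.update_self]
      · rw [Function.update_of_ne (by simp [Subtype.ext_iff, hpk]),
          Function.update_of_ne hpk]
  rw [← e1, ← e2, key]

/-- Cycles: for pairwise distinct `i, j, k`, if `j ∈ U(f_{i0})`, `i ∈ U(f_{j b_j})`,
`k ∈ U(f_{i1})` and `i ∈ U(f_{k b_k})`, then all three variables are useless for `f`. -/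
theorem useless_of_two_cycles (n : ℕ) (f : (Fin n → Bool) → Bool) (i j k : Fin n)
    (hij : i ≠ j) (hik : i ≠ k) (hjk : j ≠ k) (bj bk : Bool)
    (h1 : UselessIn f i false j) (h2 : UselessIn f j bj i)
    (h3 : UselessIn f i true k) (h4 : UselessIn f k bk i) :
    ¬ DependsOnVar f i ∧ ¬ DependsOnVar f j ∧ ¬ DependsOnVar f k := by
  have H1 : ∀ (a : Fin n → Bool), a i = false → ∀ c, f (Function.update a j c) = f a :=
    fun a ha c => h1.set_eq ha c
  have H2 : ∀ (a : Fin n → Bool), a j = bj → ∀ c, f (Function.update a i c) = f a :=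
    fun a ha c => h2.set_eq ha c
  have H3 : ∀ (a : Fin n → Bool), a i = true → ∀ c, f (Function.update a k c) = f a :=
    fun a ha c => h3.set_eq ha c
  have H4 : ∀ (a : Fin n → Bool), a k = bk → ∀ c, f (Function.update a i c) = f a :=
    fun a ha c => h4.set_eq ha c
  have E : ∀ a : Fin n → Bool, f (Function.update a i true) = f (Function.update a i false) := by
    intro a
    have ha0i : (Function.update a i false) i = false := by simp
    have ha1i : (Function.update a i true) i = true := by simp
    have e1 : f (Function.update a i false)
        = f (Function.update (Function.update a i false) j bj) := (H1 _ ha0i bj).symm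
    have e2 : f (Function.update (Function.update a i false) j bj)
        = f (Function.update (Function.update a i true) j bj) := by
      have hx : (Function.update (Function.update a i false) j bj) j = bj := by simp
      have h := H2 _ hx true
      have heq : Function.update (Function.update (Function.update a i false) j bj) i true
          = Function.update (Function.update a i true) j bj := by
        funext p
        by_cases hp : p = i <;> by_cases hq : p = j <;>
          simp [Function.update, hp, hq, hij, hij.symm]
      rw [heq] at h; exact h.symm
    have e3 : f (Function.update (Function.update a i true) j bj)
        = f (Function.update (Function.update (Function.update a i true) j bj) k bk) := by
      have hx : (Function.update (Function.update a i true) j bj) i = true := by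
        rw [Function.update_of_ne hij]; exact ha1i
      exact (H3 _ hx bk).symm
    have e4 : f (Function.update (Function.update (Function.update a i true) j bj) k bk)
        = f (Function.update (Function.update (Function.update a i false) j bj) k bk) := by
      have hx : (Function.update (Function.update (Function.update a i true) j bj) k bk) k
          = bk := by simp
      have h := H4 _ hx false
      have heq : Function.update
          (Function.update (Function.update (Function.update a i true) j bj) k bk) i false
          = Function.update (Function.update (Function.update a i false) j bj) k bk := by
        funext p
        by_cases hp : p = i <;> by_cases hq : p = j <;> by_cases hr : p = k <;>
          simp [Function.update, hp, hq, hr] <;> simp_all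
      rw [heq] at h; exact h.symm
    have e5 : f (Function.update (Function.update (Function.update a i false) j bj) k bk)
        = f (Function.update (Function.update a i false) k bk) := by
      have hx : (Function.update (Function.update a i false) k bk) i = false := by
        rw [Function.update_of_ne hik]; exact ha0i
      have h := H1 _ hx bj
      have heq : Function.update (Function.update (Function.update a i false) k bk) j bj
          = Function.update (Function.update (Function.update a i false) j bj) k bk := by
        funext p
        by_cases hq : p = j <;> by_cases hr : p = k <;>
          simp [Function.update, hq, hr] <;> simp_all
      rw [heq] at h; exact h
    have e6 : f (Function.update (Function.update a i false) k bk)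
        = f (Function.update (Function.update a i true) k bk) := by
      have hx : (Function.update (Function.update a i false) k bk) k = bk := by simp
      have h := H4 _ hx true
      have heq : Function.update (Function.update (Function.update a i false) k bk) i true
          = Function.update (Function.update a i true) k bk := by
        funext p
        by_cases hp : p = i <;> by_cases hr : p = k <;>
          simp [Function.update, hp, hr, hik, hik.symm]
      rw [heq] at h; exact h.symm
    have e7 : f (Function.update (Function.update a i true) k bk)
        = f (Function.update a i true) := H3 _ ha1i bk
    exact (((((e1.trans e2).trans e3).trans e4).trans e5).trans ((e6.trans e7))).symm
  have Si : ∀ (a : Fin n → Bool) (c : Bool), f (Function.update a i c) = f a := by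
    intro a c
    by_cases hca : c = a i
    · rw [hca, Function.update_eq_self]
    · cases hai : a i
      · have hc : c = true := by cases c <;> simp_all
        rw [hc, E a, ← hai, Function.update_eq_self]
      · have hc : c = false := by cases c <;> simp_all
        rw [hc, ← E a, ← hai, Function.update_eq_self]
  refine ⟨fun ⟨a, hne⟩ => hne (Si a _), fun ⟨a, hne⟩ => hne ?_, fun ⟨a, hne⟩ => hne ?_⟩
  · calc f (Function.update a j (!a j))
        = f (Function.update (Function.update a j (!a j)) i false) := (Si _ false).symm
      _ = f (Function.update (Function.update a i false) j (!a j)) := by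
          rw [Function.update_comm (Ne.symm hij)]
      _ = f (Function.update a i false) :=
          H1 _ (Function.update_self i false a) _
      _ = f a := Si a false
  · calc f (Function.update a k (!a k))
        = f (Function.update (Function.update a k (!a k)) i true) := (Si _ true).symm
      _ = f (Function.update (Function.update a i true) k (!a k)) := by
          rw [Function.update_comm (Ne.symm hik)]
      _ = f (Function.update a i true) :=
          H3 _ (Function.update_self i true a) _
      _ = f a := Si a true
end

section
/- (Main Claim) Let f : {0,1}^n → {0,1} be a Boolean function such that for every i ∈ [n], both U(f_{i0}) ≠ ∅ and U(f_{i1}) ≠ ∅. Let S ⊆ [n] satisfy |S| ≥ 2 and U1(f, S) ⊆ S. Then there exists j ∈ S such that variable j is useless for f (i.e., f_{j0} = f_{j1}). -/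
/-- `U(f_{ib})` as a set of indices in `[n]`. -/
def Uset {n : ℕ} (f : (Fin n → Bool) → Bool) (i : Fin n) (b : Bool) : Set (Fin n) :=
  {k | UselessIn f i b k}

/-- `U1(f, S) = ⋃_{j ∈ S} (U(f_{j0}) ∪ U(f_{j1}))`. -/
def U1 {n : ℕ} (f : (Fin n → Bool) → Bool) (S : Set (Fin n)) : Set (Fin n) :=
  ⋃ j ∈ S, (Uset f j false ∪ Uset f j true)

/-- Semantic version of `UselessIn`. -/
private lemma uselessIn_iff {n : ℕ} (f : (Fin n → Bool) → Bool) (i : Fin n) (b : Bool)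
    (k : Fin n) :
    UselessIn f i b k ↔ k ≠ i ∧ ∀ a : Fin n → Bool, a i = b →
      f (Function.update a k (!a k)) = f a := by
  have key : ∀ (y : {l : Fin n // l ≠ i} → Bool) (c : Fin n → Bool),
      (∀ (l : Fin n) (h : l ≠ i), c l = y ⟨l, h⟩) → c i = b → restrictBit f i b y = f c := by
    intro y c hcy hci
    show f _ = f c
    congr 1
    funext l
    by_cases h : l = i
    · subst h; rw [dif_pos rfl, hci]
    · rw [dif_neg h, hcy l h]
  constructor
  · rintro ⟨hki, hnd⟩
    refine ⟨hki, fun a ha => ?_⟩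
    simp only [DependsOnVar] at hnd
    push_neg at hnd
    have h1 := hnd (fun l => a l.1)
    have r1 : restrictBit f i b (fun l => a l.1) = f a := key _ a (fun l h => rfl) ha
    have r2 : restrictBit f i b
        (Function.update (fun (l : {l : Fin n // l ≠ i}) => a l.1) ⟨k, hki⟩
          (!((fun (l : {l : Fin n // l ≠ i}) => a l.1) ⟨k, hki⟩))) =
        f (Function.update a k (!a k)) := by
      apply key
      · intro l h
        rw [Function.update_apply, Function.update_apply]
        by_cases hlk : l = k
        · simp [hlk]
        · simp [hlk, Subtype.ext_iff]
      · rw [Function.update_of_ne (Ne.symm hki)]; exact ha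
    rw [r1, r2] at h1
    exact h1
  · rintro ⟨hki, hsem⟩
    refine ⟨hki, ?_⟩
    rintro ⟨y, hy⟩
    apply hy
    have r1 : restrictBit f i b y = f (fun l => if h : l = i then b else y ⟨l, h⟩) := rfl
    have ha : (fun l => if h : l = i then b else y ⟨l, h⟩) i = b := dif_pos rfl
    have hak : (fun l => if h : l = i then b else y ⟨l, h⟩) k = y ⟨k, hki⟩ := dif_neg hki
    have r2 : restrictBit f i b (Function.update y ⟨k, hki⟩ (!(y ⟨k, hki⟩))) =
        f (Function.update (fun l => if h : l = i then b else y ⟨l, h⟩) k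
            (!((fun l => if h : l = i then b else y ⟨l, h⟩) k))) := by
      apply key
      · intro l h
        rw [Function.update_apply, Function.update_apply, hak]
        by_cases hlk : l = k
        · simp [hlk]
        · simp [hlk, Subtype.ext_iff, h]
      · rw [Function.update_of_ne (Ne.symm hki)]; exact ha
    rw [r1, r2]
    exact hsem _ ha
  
/-- If `f` never changes when flipping `k`, the two restrictions at `k` agree. -/
private lemma indep_restrict {n : ℕ} (f : (Fin n → Bool) → Bool) (k : Fin n)
    (h : ∀ a, f (Function.update a k (!a k)) = f a) :
    restrictBit f k false = restrictBit f k true := by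
  funext y
  show f _ = f _
  have e1 : (fun l => if hl : l = k then true else y ⟨l, hl⟩) =
      Function.update (fun l => if hl : l = k then false else y ⟨l, hl⟩) k
        (!((fun l => if hl : l = k then false else y ⟨l, hl⟩) k)) := by
    funext l
    by_cases hl : l = k
    · subst hl; simp
    · simp [hl, Function.update_of_ne hl]
  rw [e1, h]

/-- `ConM f S i k v` : `k ∈ S`, `k ≠ i` and flipping `k` never changes `f` on the slice
`x_i = ¬v` (i.e. every flip-`k` disagreement satisfies `x_i = v`). -/
private def ConM {n : ℕ} (f : (Fin n → Bool) → Bool) (S : Finset (Fin n))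
    (i k : Fin n) (v : Bool) : Prop :=
  k ∈ S ∧ k ≠ i ∧ ∀ a : Fin n → Bool, a i = !v → f (Function.update a k (!a k)) = f a

/-- Propagation rule for constraints. -/
private lemma con_chain {n : ℕ} {f : (Fin n → Bool) → Bool} {S : Finset (Fin n)}
    {i j k : Fin n} {v w : Bool} (hjk : j ≠ k)
    (h1 : ConM f S i k v) (h2 : ConM f S j i w) : ConM f S j k w := by
  obtain ⟨hkS, hki, hk⟩ := h1
  obtain ⟨hiS, hij, hi⟩ := h2
  refine ⟨hkS, Ne.symm hjk, fun a ha => ?_⟩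
  by_cases hv : a i = !v
  · exact hk a hv
  · have e1 : f (Function.update a i (!a i)) = f a := hi a ha
    have e2 : f (Function.update (Function.update a i (!a i)) k
        (!(Function.update a i (!a i)) k)) = f (Function.update a i (!a i)) := by
      apply hk
      rw [Function.update_self]
      cases hx : a i <;> cases v <;> simp_all
    have e3 : f (Function.update (Function.update a k (!a k)) i
        (!(Function.update a k (!a k)) i)) = f (Function.update a k (!a k)) := by
      apply hi
      rw [Function.update_of_ne hjk]
      exact ha
    have e4 : Function.update (Function.update a i (!a i)) k
        (!(Function.update a i (!a i)) k) =
        Function.update (Function.update a k (!a k)) i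
        (!(Function.update a k (!a k)) i) := by
      rw [Function.update_of_ne hki, Function.update_of_ne (Ne.symm hki)]
      exact Function.update_comm (Ne.symm hki) _ _ _
    calc f (Function.update a k (!a k))
        = f (Function.update (Function.update a k (!a k)) i
            (!(Function.update a k (!a k)) i)) := e3.symm
      _ = f (Function.update a i (!a i)) := by rw [← e4]; exact e2
      _ = f a := e1

/-- Invariant for the descent: `C` nonempty, `C ⊆ S`, the exception `x` is outside `C`,
and `C` is closed under constraint-targets other than `x`. -/
private def InvM {n : ℕ} (f : (Fin n → Bool) → Bool) (S C : Finset (Fin n))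
    (x : Fin n) : Prop :=
  C.Nonempty ∧ C ⊆ S ∧ x ∉ C ∧ ∀ i ∈ C, ∀ k v, ConM f S i k v → k ≠ x → k ∈ C

/-- Main Claim: if every one-variable restriction of `f` has a useless variable, and
`S ⊆ [n]` with `|S| ≥ 2` satisfies `U1(f, S) ⊆ S`, then some `j ∈ S` is useless for `f`,
i.e. `f_{j0} = f_{j1}`. -/
theorem main_claim (n : ℕ) (f : (Fin n → Bool) → Bool)
    (hne : ∀ (i : Fin n) (b : Bool), (Uset f i b).Nonempty)
    (S : Finset (Fin n)) (hS : 2 ≤ S.card) (hcl : U1 f ↑S ⊆ ↑S) :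
    ∃ j ∈ S, restrictBit f j false = restrictBit f j true := by
  classical
  by_contra hcon
  push_neg at hcon
  -- F2: no variable is constrained to both slices (else it would be globally useless)
  have hF2 : ∀ i k : Fin n, ConM f S i k false → ConM f S i k true → False := by
    intro i k h0 h1
    obtain ⟨hkS, hki, hk0⟩ := h0
    obtain ⟨-, -, hk1⟩ := h1
    have hind : ∀ a, f (Function.update a k (!a k)) = f a := by
      intro a
      cases hx : a i
      · exact hk1 a (by simp [hx])
      · exact hk0 a (by simp [hx])
    exact hcon k hkS (indep_restrict f k hind)
  -- F1: every row has a constraint with each value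
  have hF1 : ∀ i ∈ S, ∀ v : Bool, ∃ k, ConM f S i k v := by
    intro i hi v
    obtain ⟨k, hk⟩ := hne i (!v)
    have hkU : k ∈ U1 f ↑S := by
      refine Set.mem_iUnion₂.mpr ⟨i, Finset.mem_coe.mpr hi, ?_⟩
      cases v
      · exact Or.inr hk
      · exact Or.inl hk
    have hkS : k ∈ S := Finset.mem_coe.mp (hcl hkU)
    obtain ⟨hki, hsem⟩ := (uselessIn_iff f i (!v) k).mp hk
    exact ⟨k, hkS, hki, hsem⟩
  -- descent step
  have hstep : ∀ (C : Finset (Fin n)) (x : Fin n), InvM f S C x →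
      ∃ C' j, InvM f S C' j ∧ C'.card < C.card := by
    intro C x hInv
    obtain ⟨hCne, hCS, hxC, hclosed⟩ := hInv
    obtain ⟨j, hjC⟩ := hCne
    have hjS := hCS hjC
    have hvx : ∃ v, ¬ ConM f S j x v := by
      by_cases h0 : ConM f S j x false
      · exact ⟨true, fun h1 => hF2 j x h0 h1⟩
      · exact ⟨false, h0⟩
    obtain ⟨v, hv⟩ := hvx
    obtain ⟨k0, hk0⟩ := hF1 j hjS v
    refine ⟨S.filter (fun k => ConM f S j k v), j,
      ⟨⟨k0, Finset.mem_filter.mpr ⟨hk0.1, hk0⟩⟩, Finset.filter_subset _ _, ?_, ?_⟩, ?_⟩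
    · intro hj
      exact (Finset.mem_filter.mp hj).2.2.1 rfl
    · intro i hi k w hik hkj
      have hjiv : ConM f S j i v := (Finset.mem_filter.mp hi).2
      have hc : ConM f S j k v := con_chain (Ne.symm hkj) hik hjiv
      exact Finset.mem_filter.mpr ⟨hc.1, hc⟩
    · have hsub : S.filter (fun k => ConM f S j k v) ⊆ C.erase j := by
        intro k hk
        have hc := (Finset.mem_filter.mp hk).2
        have hkx : k ≠ x := fun h => hv (h ▸ hc)
        exact Finset.mem_erase.mpr ⟨hc.2.1, hclosed j hjC k v hc hkx⟩
      calc (S.filter (fun k => ConM f S j k v)).card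
          ≤ (C.erase j).card := Finset.card_le_card hsub
        _ < C.card := Finset.card_erase_lt_of_mem hjC
  -- initial invariant
  have hSne : S.Nonempty := Finset.card_pos.mp (lt_of_lt_of_le (by norm_num) hS)
  obtain ⟨j0, hj0⟩ := hSne
  obtain ⟨k0, hk00⟩ := hF1 j0 hj0 false
  have hInv0 : InvM f S (S.filter (fun k => ConM f S j0 k false)) j0 := by
    refine ⟨⟨k0, Finset.mem_filter.mpr ⟨hk00.1, hk00⟩⟩, Finset.filter_subset _ _, ?_, ?_⟩
    · intro hj
      exact (Finset.mem_filter.mp hj).2.2.1 rfl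
    · intro i hi k w hik hkj
      have hji : ConM f S j0 i false := (Finset.mem_filter.mp hi).2
      have hc : ConM f S j0 k false := con_chain (Ne.symm hkj) hik hji
      exact Finset.mem_filter.mpr ⟨hc.1, hc⟩
  -- infinite descent
  have hdesc : ∀ (N : ℕ) (C : Finset (Fin n)) (x : Fin n), C.card ≤ N → InvM f S C x → False := by
    intro N
    induction N with
    | zero =>
      rintro C x hle ⟨⟨c, hc⟩, -, -, -⟩
      have := Finset.card_pos.mpr ⟨c, hc⟩
      omega
    | succ N ih =>
      intro C x hle hInv
      obtain ⟨C', j, hInv', hlt⟩ := hstep C x hInv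
      exact ih C' j (by omega) hInv'
  exact hdesc _ _ _ le_rfl hInv0
end

section
/- For each n, let k = k(n) = ⌊log₂ n⌋ − 1, and for a Boolean function f : {0,1}^n → {0,1} say that f has a good restriction if there exists a set I ⊆ [n] with |[n]∖I| = k and an assignment ρ : I → {0,1} such that the subfunction f|_ρ on the k free variables is symmetric and depends on all k of those variables. Then the fraction of functions f : {0,1}^n → {0,1} (out of all 2^{2^n} such functions) that have a good restriction tends to 1 as n → ∞. -/
/-- `g` depends on variable `i`: flipping the `i`-th coordinate of some input changes the value. -/
def BoolDependsOn {ι : Type*} [DecidableEq ι] (g : (ι → Bool) → Bool) (i : ι) : Prop :=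
  ∃ a : ι → Bool, g (Function.update a i (!a i)) ≠ g a

/-- A Boolean function on a subtype of coordinates is symmetric: invariant under all
permutations of its input coordinates. -/
def SymmFunOn {ι : Type*} (g : (ι → Bool) → Bool) : Prop :=
  ∀ (σ : Equiv.Perm ι) (x : ι → Bool), g (x ∘ σ) = g x

/-- The subfunction `f|_ρ` obtained by fixing each variable `x_i` with `i ∈ I` to `ρ i`,
as a Boolean function on the free variables indexed by `[n] \ I`. -/
def restrictSet {n : ℕ} (f : (Fin n → Bool) → Bool) (I : Finset (Fin n)) (ρ : Fin n → Bool) :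
    ({j : Fin n // j ∉ I} → Bool) → Bool :=
  fun y => f (fun j => if h : j ∈ I then ρ j else y ⟨j, h⟩)

/-- `f` has a good restriction: a restriction leaving `k = ⌊log₂ n⌋ - 1` variables free whose
subfunction is symmetric and depends on all `k` free variables. -/
def HasGoodRestriction (n : ℕ) (f : (Fin n → Bool) → Bool) : Prop :=
  ∃ (I : Finset (Fin n)) (ρ : Fin n → Bool),
    (Finset.univ \ I).card = Nat.log 2 n - 1 ∧
    SymmFunOn (restrictSet f I ρ) ∧
    ∀ j : {j : Fin n // j ∉ I}, BoolDependsOn (restrictSet f I ρ) j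

-- ## Auxiliary: there are at least two "good" functions on any coordinate type
section good

variable {ι : Type*} [Fintype ι] [DecidableEq ι]

private def orFun : (ι → Bool) → Bool := fun y => decide (∃ j, y j = true)

private lemma symm_orFun : SymmFunOn (orFun (ι := ι)) := by
  intro σ x
  simp only [orFun, Function.comp]
  rw [decide_eq_decide]
  constructor
  · rintro ⟨j, h⟩; exact ⟨σ j, h⟩
  · rintro ⟨j, h⟩; exact ⟨σ.symm j, by simpa using h⟩

private lemma depends_orFun (j : ι) : BoolDependsOn (orFun (ι := ι)) j := by
  refine ⟨fun _ => false, ?_⟩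
  have h1 : orFun (Function.update (fun _ : ι => false) j (!false)) = true := by
    simp only [orFun, decide_eq_true_eq]
    exact ⟨j, by simp⟩
  have h2 : orFun (fun _ : ι => false) = false := by
    simp [orFun]
  rw [h1, h2]; simp

private lemma symm_not {g : (ι → Bool) → Bool} (h : SymmFunOn g) :
    SymmFunOn (fun y => !(g y)) := fun σ x => by simp [h σ x]

private lemma depends_not {g : (ι → Bool) → Bool} {j : ι} (h : BoolDependsOn g j) :
    BoolDependsOn (fun y => !(g y)) j := by
  obtain ⟨a, ha⟩ := h
  exact ⟨a, by simpa using ha⟩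

open Classical in
private lemma two_le_card_good :
    2 ≤ Nat.card {g : (ι → Bool) → Bool // SymmFunOn g ∧ ∀ j, BoolDependsOn g j} := by
  classical
  rw [Nat.card_eq_fintype_card]
  have : Nontrivial {g : (ι → Bool) → Bool // SymmFunOn g ∧ ∀ j, BoolDependsOn g j} := ?_
  · exact Fintype.one_lt_card_iff_nontrivial.2 this
  refine ⟨⟨orFun, symm_orFun, fun j => depends_orFun j⟩,
    ⟨fun y => !(orFun y), symm_not symm_orFun, fun j => depends_not (depends_orFun j)⟩, ?_⟩
  intro h
  have := congrArg (fun z => z.1 (fun _ : ι => false)) h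
  simp only [orFun] at this
  simp at this
end good


-- ## Counting lemma
open Classical in
lemma badcount_le (n : ℕ) (hkn : Nat.log 2 n - 1 ≤ n) :
    Nat.card {f : (Fin n → Bool) → Bool // ¬ HasGoodRestriction n f} ≤
      (2 ^ 2 ^ (Nat.log 2 n - 1) - 2) ^ 2 ^ (n - (Nat.log 2 n - 1)) := by
  classical
  set k : ℕ := Nat.log 2 n - 1 with hk
  set I : Finset (Fin n) := Finset.univ.filter (fun j => k ≤ (j : ℕ)) with hI
  have hmem : ∀ j : Fin n, j ∈ I ↔ k ≤ (j : ℕ) := by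
    intro j; simp [hI]
  -- the free variables are equivalent to `Fin k`
  have eS' : {j : Fin n // (j : ℕ) < k} ≃ Fin k :=
    { toFun := fun j => ⟨(j.1 : ℕ), j.2⟩
      invFun := fun i => ⟨⟨i, lt_of_lt_of_le i.2 hkn⟩, i.2⟩
      left_inv := fun j => Subtype.ext (Fin.ext rfl)
      right_inv := fun i => rfl }
  have eS : {j : Fin n // j ∉ I} ≃ Fin k :=
    (Equiv.subtypeEquivRight (fun j => by rw [hmem]; exact Nat.not_le)).trans eS'
  have hS : Nat.card {j : Fin n // j ∉ I} = k := by
    rw [Nat.card_congr eS, Nat.card_eq_fintype_card, Fintype.card_fin]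
  -- card of the finset complement
  have hcompl : (Finset.univ \ I).card = k := by
    have h1 : Finset.univ \ I =
        Finset.map ⟨Fin.castLE hkn, Fin.castLE_injective hkn⟩ Finset.univ := by
      ext j
      simp only [Finset.mem_sdiff, Finset.mem_univ, true_and, Finset.mem_map,
        Function.Embedding.coeFn_mk, hmem, Nat.not_le]
      constructor
      · intro hj; exact ⟨⟨(j : ℕ), hj⟩, Fin.ext rfl⟩
      · rintro ⟨i, rfl⟩; exact i.2
    rw [h1, Finset.card_map, Finset.card_univ, Fintype.card_fin]
  have hT : Nat.card {j : Fin n // j ∈ I} = n - k := by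
    have h2 := Nat.card_congr (Equiv.sumCompl (fun j : Fin n => j ∈ I))
    rw [Nat.card_sum, Nat.card_eq_fintype_card (α := Fin n), Fintype.card_fin, hS] at h2
    omega
  -- the equivalence decomposing a function according to the values on `I`
  set E0 : (Fin n → Bool) ≃ ({x // x ∈ I} → Bool) × ({x // x ∉ I} → Bool) :=
    Equiv.piEquivPiSubtypeProd (fun j => j ∈ I) (fun _ => Bool) with hE0
  set E : ((Fin n → Bool) → Bool) ≃ (({x // x ∈ I} → Bool) → ({x // x ∉ I} → Bool) → Bool) :=
    (Equiv.arrowCongr E0 (Equiv.refl Bool)).trans (Equiv.curry _ _ _) with hE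
  have hres : ∀ (f : (Fin n → Bool) → Bool) (a : {x // x ∈ I} → Bool),
      restrictSet f I (fun j => if h : j ∈ I then a ⟨j, h⟩ else false) = E f a := by
    intro f a
    funext y
    show f _ = f _
    congr 1
    funext j
    by_cases h : j ∈ I
    · simp [h, hE, hE0, Equiv.piEquivPiSubtypeProd]
    · simp [h, hE, hE0, Equiv.piEquivPiSubtypeProd]
  set Bad : (({x // x ∉ I} → Bool) → Bool) → Prop :=
    fun g => ¬ (SymmFunOn g ∧ ∀ j, BoolDependsOn g j) with hBad
  have key : ∀ f : (Fin n → Bool) → Bool, ¬ HasGoodRestriction n f → ∀ a, Bad (E f a) := by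
    intro f hf a hgood
    apply hf
    refine ⟨I, fun j => if h : j ∈ I then a ⟨j, h⟩ else false, ?_, ?_, ?_⟩
    · rw [hcompl]
    · rw [hres f a]; exact hgood.1
    · rw [hres f a]; exact hgood.2
  have step1 : Nat.card {f : (Fin n → Bool) → Bool // ¬ HasGoodRestriction n f} ≤
      Nat.card {h : ({x // x ∈ I} → Bool) → ({x // x ∉ I} → Bool) → Bool // ∀ a, Bad (h a)} := by
    apply Nat.card_le_card_of_injective
      (fun f => (⟨E f.1, key f.1 f.2⟩ :
        {h : ({x // x ∈ I} → Bool) → ({x // x ∉ I} → Bool) → Bool // ∀ a, Bad (h a)}))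
    intro f g hfg
    apply Subtype.ext
    exact E.injective (congrArg Subtype.val hfg)
  have step2 : Nat.card
        {h : ({x // x ∈ I} → Bool) → ({x // x ∉ I} → Bool) → Bool // ∀ a, Bad (h a)} =
      (Nat.card {g : ({x // x ∉ I} → Bool) → Bool // Bad g}) ^ 2 ^ (n - k) := by
    rw [Nat.card_congr (Equiv.subtypePiEquivPi (p := fun _ => Bad)), Nat.card_fun]
    congr 1
    rw [Nat.card_fun, hT]
    norm_num [Nat.card_eq_fintype_card]
  have step3 : Nat.card {g : ({x // x ∉ I} → Bool) → Bool // Bad g} ≤ 2 ^ 2 ^ k - 2 := by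
    have htot : Nat.card (({x // x ∉ I} → Bool) → Bool) = 2 ^ 2 ^ k := by
      rw [Nat.card_fun, Nat.card_fun, hS]
      norm_num [Nat.card_eq_fintype_card]
    have hgood2 : 2 ≤ Nat.card {g : ({x // x ∉ I} → Bool) → Bool //
        SymmFunOn g ∧ ∀ j, BoolDependsOn g j} := two_le_card_good
    have hsum := Nat.card_congr
      (Equiv.sumCompl (fun g : ({x // x ∉ I} → Bool) → Bool =>
        SymmFunOn g ∧ ∀ j, BoolDependsOn g j))
    rw [Nat.card_sum, htot] at hsum
    have heq : Nat.card {g : ({x // x ∉ I} → Bool) → Bool // Bad g} =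
        Nat.card {g : ({x // x ∉ I} → Bool) → Bool //
          ¬ (SymmFunOn g ∧ ∀ j, BoolDependsOn g j)} := by
      simp only [hBad]
    rw [heq]
    refine Nat.le_sub_of_add_le ?_
    rw [Nat.add_comm, ← hsum]
    exact Nat.add_le_add_right hgood2 _
  calc Nat.card {f : (Fin n → Bool) → Bool // ¬ HasGoodRestriction n f}
      ≤ (Nat.card {g : ({x // x ∉ I} → Bool) → Bool // Bad g}) ^ 2 ^ (n - k) :=
        step1.trans step2.le
    _ ≤ (2 ^ 2 ^ k - 2) ^ 2 ^ (n - k) := Nat.pow_le_pow_left step3 _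

-- ## Arithmetic auxiliary lemmas
private lemma two_mul_succ_le_pow (m : ℕ) (hm : 4 ≤ m) : 2 * (m + 1) ≤ 2 ^ m := by
  induction m, hm using Nat.le_induction with
  | base => norm_num
  | succ m hm ih =>
    have h2 : 2 ≤ 2 ^ m := by
      calc 2 = 2 ^ 1 := (pow_one 2).symm
        _ ≤ 2 ^ m := Nat.pow_le_pow_right (by norm_num) (by omega)
    calc 2 * (m + 1 + 1) = 2 * (m + 1) + 2 := by ring
      _ ≤ 2 ^ m + 2 ^ m := Nat.add_le_add ih h2
      _ = 2 ^ (m + 1) := by ring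

private lemma log_tendsto : Filter.Tendsto (fun n => Nat.log 2 n) Filter.atTop Filter.atTop := by
  rw [Filter.tendsto_atTop]
  intro b
  filter_upwards [Filter.eventually_ge_atTop (2 ^ b)] with n hn
  have h1 : 1 ≤ 2 ^ b := Nat.one_le_two_pow
  exact (Nat.le_log_iff_pow_le one_lt_two (by omega)).2 hn

private lemma e_tendsto :
    Filter.Tendsto (fun n : ℕ => n / 2 - Nat.log 2 n) Filter.atTop Filter.atTop := by
  rw [Filter.tendsto_atTop]
  intro b
  filter_upwards [log_tendsto.eventually_ge_atTop (max 5 b),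
    Filter.eventually_ge_atTop 2] with n hL hn
  have h5 : 5 ≤ Nat.log 2 n := le_trans (le_max_left _ _) hL
  have hb : b ≤ Nat.log 2 n := le_trans (le_max_right _ _) hL
  have h1 : 2 ^ Nat.log 2 n ≤ n := Nat.pow_log_le_self 2 (by omega)
  have h2 : 2 ^ (Nat.log 2 n - 1) ≤ n / 2 := by
    refine (Nat.le_div_iff_mul_le (by norm_num)).2 ?_
    have hpow : 2 ^ (Nat.log 2 n - 1) * 2 = 2 ^ Nat.log 2 n := by
      rw [← pow_succ]; congr 1; omega
    rw [hpow]; exact h1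
  have h3 : 2 * Nat.log 2 n ≤ 2 ^ (Nat.log 2 n - 1) := by
    have h4 := two_mul_succ_le_pow (Nat.log 2 n - 1) (by omega)
    have hL1 : Nat.log 2 n - 1 + 1 = Nat.log 2 n := by omega
    rwa [hL1] at h4
  generalize 2 ^ (Nat.log 2 n - 1) = P at h2 h3
  omega


/-- The fraction of Boolean functions `f : {0,1}^n → {0,1}` having a good restriction
(with `k = ⌊log₂ n⌋ - 1` free variables) tends to `1` as `n → ∞`. -/
theorem almost_all_have_good_restriction :
    Filter.Tendsto (fun n : ℕ =>
      (Nat.card {f : (Fin n → Bool) → Bool // HasGoodRestriction n f} : ℝ) / 2 ^ (2 ^ n))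
      Filter.atTop (nhds 1) := by
  classical
  have htotal : ∀ n : ℕ, Nat.card ((Fin n → Bool) → Bool) = 2 ^ 2 ^ n := by
    intro n
    rw [Nat.card_fun, Nat.card_fun]
    simp [Nat.card_eq_fintype_card]
  have hsum : ∀ n : ℕ, Nat.card {f : (Fin n → Bool) → Bool // HasGoodRestriction n f}
      + Nat.card {f : (Fin n → Bool) → Bool // ¬ HasGoodRestriction n f} = 2 ^ 2 ^ n := by
    intro n
    have h := Nat.card_congr
      (Equiv.sumCompl (fun f : (Fin n → Bool) → Bool => HasGoodRestriction n f))
    rwa [Nat.card_sum, htotal n] at h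
  have hbad : Filter.Tendsto (fun n : ℕ =>
      (Nat.card {f : (Fin n → Bool) → Bool // ¬ HasGoodRestriction n f} : ℝ) / 2 ^ 2 ^ n)
      Filter.atTop (nhds 0) := by
    apply squeeze_zero'
      (g := fun n : ℕ => ((2 : ℝ)⁻¹) ^ (n / 2 - Nat.log 2 n))
    · filter_upwards with n; positivity
    · filter_upwards [Filter.eventually_ge_atTop 4] with n hn4
      -- notation
      have hn0 : n ≠ 0 := by omega
      have hL2 : 2 ≤ Nat.log 2 n := by
        refine (Nat.le_log_iff_pow_le one_lt_two hn0).2 (by norm_num; omega)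
      set L := Nat.log 2 n with hL
      set k := L - 1 with hkdef
      have h2Ln : 2 ^ L ≤ n := Nat.pow_log_le_self 2 hn0
      have hLlt : L < 2 ^ L := Nat.lt_two_pow_self (n := L)
      have hkn : k ≤ n := by omega
      have hk1 : 1 ≤ k := by omega
      have hpow2k : 2 ^ k ≤ n / 2 := by
        refine (Nat.le_div_iff_mul_le (by norm_num)).2 ?_
        have hpow : 2 ^ k * 2 = 2 ^ L := by rw [← pow_succ]; congr 1; omega
        rw [hpow]; exact h2Ln
      have hLk : L ≤ 2 ^ k := by
        have := Nat.lt_two_pow_self (n := k)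
        omega
      have hA4 : 4 ≤ 2 ^ 2 ^ k := by
        calc (4:ℕ) = 2 ^ 2 := by norm_num
          _ ≤ 2 ^ 2 ^ k := Nat.pow_le_pow_right (by norm_num)
            (by calc 2 = 2^1 := by norm_num
                  _ ≤ 2^k := Nat.pow_le_pow_right (by norm_num) hk1)
      have hnat : (n / 2 - L) + 2 ^ k ≤ 1 + (n - k) := by
        generalize 2 ^ k = P at hpow2k hLk
        omega
      have hexp : (2:ℕ) ^ ((n / 2 - L) + 2 ^ k) ≤ 2 ^ (1 + (n - k)) :=
        Nat.pow_le_pow_right (by norm_num) hnat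
      have hB := badcount_le n (by omega)
      rw [← hL] at hB
      -- pass to the reals
      set A : ℝ := 2 ^ 2 ^ k with hA
      have hApos : (0:ℝ) < A := by positivity
      have hA4' : (4:ℝ) ≤ A := by
        have := (Nat.cast_le (α := ℝ)).2 hA4
        rwa [Nat.cast_ofNat, Nat.cast_pow, Nat.cast_ofNat] at this
      set M := 2 ^ (n - k) with hM
      have hMpos : (0:ℝ) < (2:ℝ) ^ (n - k) := by positivity
      -- denominator decomposition
      have hden : (2:ℝ) ^ 2 ^ n = A ^ M := by
        rw [hA, ← pow_mul, hM]
        congr 1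
        rw [← pow_add]
        congr 1
        omega
      -- numerator bound, in ℝ
      have hBR : (Nat.card {f : (Fin n → Bool) → Bool // ¬ HasGoodRestriction n f} : ℝ)
          ≤ (A - 2) ^ M := by
        have h1 := (Nat.cast_le (α := ℝ)).2 hB
        have h2 : (((2 ^ 2 ^ k - 2 : ℕ) : ℝ)) = A - 2 := by
          rw [Nat.cast_sub (by omega)]
          push_cast [hA]
          ring
        rwa [Nat.cast_pow, h2] at h1
      have hA2nonneg : (0:ℝ) ≤ A - 2 := by linarith
      -- main estimate
      set x : ℝ := 2 / A with hx
      have hx0 : 0 < x := by positivity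
      have hx1 : x ≤ 1 / 2 := by
        rw [hx, div_le_div_iff₀ hApos (by norm_num)]
        linarith
      have hfrac : (A - 2) / A = 1 - x := by
        rw [hx]; field_simp
      have hber : ((M:ℝ)) * x ≤ (1 + x) ^ M := by
        have h := one_add_mul_le_pow (a := x) (by linarith) M
        calc ((M:ℝ)) * x ≤ 1 + M * x := by linarith
          _ ≤ (1 + x) ^ M := h
      have hprod : (1 - x) ^ M * (1 + x) ^ M ≤ 1 := by
        rw [← mul_pow]
        have heq : (1 - x) * (1 + x) = 1 - x ^ 2 := by ring
        rw [heq]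
        refine pow_le_one₀ (by nlinarith) (by nlinarith)
      have hMxpos : (0:ℝ) < (M:ℝ) * x := by
        have : (0:ℝ) < (M:ℝ) := by
          rw [hM]; push_cast; positivity
        positivity
      have hone : (1 - x) ^ M ≤ ((M:ℝ) * x)⁻¹ := by
        have h1x : (0:ℝ) ≤ (1 - x) ^ M := by
          apply pow_nonneg; linarith
        have hkey : (1 - x) ^ M * ((M:ℝ) * x) ≤ 1 :=
          le_trans (mul_le_mul_of_nonneg_left hber h1x) hprod
        rw [← one_div]
        exact (le_div_iff₀ hMxpos).2 hkey
      -- compare (M x)⁻¹ with (1/2) ^ (n/2 - L)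
      have hcomp : ((M:ℝ) * x)⁻¹ ≤ ((2:ℝ)⁻¹) ^ (n / 2 - L) := by
        rw [inv_pow]
        refine inv_anti₀ (by positivity) ?_
        -- 2 ^ (n/2 - L) ≤ M * x
        have hcast : ((2:ℝ)) ^ ((n / 2 - L) + 2 ^ k) ≤ 2 ^ (1 + (n - k)) := by
          have := (Nat.cast_le (α := ℝ)).2 hexp
          push_cast at this
          exact this
        rw [pow_add, pow_add, pow_one] at hcast
        have hMx : (M:ℝ) * x = 2 * (2:ℝ) ^ (n - k) / A := by
          rw [hM, hx]
          push_cast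
          ring
        rw [hMx, le_div_iff₀ hApos]
        calc (2:ℝ) ^ (n / 2 - L) * A = 2 ^ (n / 2 - L) * 2 ^ 2 ^ k := by rw [hA]
          _ ≤ 2 * 2 ^ (n - k) := hcast
      -- put everything together
      calc (Nat.card {f : (Fin n → Bool) → Bool // ¬ HasGoodRestriction n f} : ℝ) / 2 ^ 2 ^ n
          ≤ (A - 2) ^ M / A ^ M := by
            rw [hden]
            exact div_le_div_of_nonneg_right hBR (by positivity) |>.trans_eq rfl
        _ = ((A - 2) / A) ^ M := by rw [div_pow]
        _ = (1 - x) ^ M := by rw [hfrac]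
        _ ≤ ((M:ℝ) * x)⁻¹ := hone
        _ ≤ ((2:ℝ)⁻¹) ^ (n / 2 - L) := hcomp
    · exact (tendsto_pow_atTop_nhds_zero_of_lt_one (by norm_num) (by norm_num)).comp e_tendsto
  have hfrac : ∀ n : ℕ,
      (Nat.card {f : (Fin n → Bool) → Bool // HasGoodRestriction n f} : ℝ) / 2 ^ 2 ^ n
      = 1 - (Nat.card {f : (Fin n → Bool) → Bool // ¬ HasGoodRestriction n f} : ℝ) / 2 ^ 2 ^ n := by
    intro n
    have h0 : ((2:ℝ)) ^ (2 ^ n) ≠ 0 := by positivity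
    rw [eq_sub_iff_add_eq, ← add_div, ← Nat.cast_add, hsum n]
    push_cast
    field_simp
  have h := (tendsto_const_nhds (x := (1:ℝ)) (f := Filter.atTop (α := ℕ))).sub hbad
  rw [sub_zero] at h
  exact h.congr (fun n => (hfrac n).symm)
end
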